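/- Let V be a finite-dimensional complex inner product space, and let A : V → V be linear with adjoint A*. Suppose V = V_0 ⊕ ... ⊕ V_k is an orthogonal decomposition with A(V_p) ⊆ V_{p+1} (indices with V_{k+1} = 0). Let P_p denote the orthogonal projection onto V_p and a_p = trace(P_{p+1} A P_p A* P_{p+1}) (the squared Hilbert–Schmidt norm of the component A_p : V_p → V_{p+1}), with a_{-1} = a_k = 0. Then the Hilbert–Schmidt norm of the commutator [A*, A] = A*A - AA* satisfies ‖[A*,A]‖_{HS} ≥ (Σ_{p=0}^{k} |a_p - a_{p-1}|) / √(dim V). -/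

import Mathlib

open LinearMap Module

/-- The Hilbert–Schmidt norm of an endomorphism: √(trace (B* B)). -/
noncomputable def hsNorm {V : Type*} [NormedAddCommGroup V] [InnerProductSpace ℂ V]
    [FiniteDimensional ℂ V] (B : V →ₗ[ℂ] V) : ℝ :=
  Real.sqrt ((LinearMap.trace ℂ V (LinearMap.adjoint B ∘ₗ B)).re)

/-- The orthogonal projection onto a subspace, as an endomorphism of the ambient space. -/
noncomputable def projOn {V : Type*} [NormedAddCommGroup V] [InnerProductSpace ℂ V]
    [FiniteDimensional ℂ V] (W : Submodule ℂ V) : V →ₗ[ℂ] V :=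
  W.subtype ∘ₗ (W.orthogonalProjectionOnto).toLinearMap

namespace Stmt6Aux

variable {V : Type*} [NormedAddCommGroup V] [InnerProductSpace ℂ V] [FiniteDimensional ℂ V]

local notation "⟪" x ", " y "⟫" => @inner ℂ _ _ x y

lemma projOn_mem (W : Submodule ℂ V) (x : V) : projOn W x ∈ W :=
  (W.orthogonalProjectionOnto x).2

lemma projOn_of_mem {W : Submodule ℂ V} {x : V} (h : x ∈ W) : projOn W x = x :=
  Submodule.starProjection_eq_self_iff.mpr h

lemma projOn_of_orth {W : Submodule ℂ V} {x : V} (h : x ∈ Wᗮ) : projOn W x = 0 := by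
  show ((W.orthogonalProjectionOnto x : W) : V) = 0
  rw [Submodule.orthogonalProjectionOnto_apply_of_mem_orthogonal h]
  rfl

lemma projOn_projOn (W : Submodule ℂ V) (x : V) : projOn W (projOn W x) = projOn W x :=
  projOn_of_mem (projOn_mem W x)

lemma adjoint_projOn (W : Submodule ℂ V) : LinearMap.adjoint (projOn W) = projOn W := by
  symm
  rw [LinearMap.eq_adjoint_iff]
  intro x y
  exact Submodule.inner_starProjection_left_eq_right W x y

lemma inner_projOn (W : Submodule ℂ V) (x y : V) : ⟪x, projOn W y⟫ = ⟪projOn W x, y⟫ := by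
  conv_lhs => rw [← adjoint_projOn W]
  exact LinearMap.adjoint_inner_right _ x y

lemma norm_projOn_le (W : Submodule ℂ V) (x : V) : ‖projOn W x‖ ≤ ‖x‖ := by
  have h1 : ‖projOn W x‖ = ‖W.orthogonalProjectionOnto x‖ := rfl
  rw [h1]
  calc ‖W.orthogonalProjectionOnto x‖ ≤ ‖W.orthogonalProjectionOnto‖ * ‖x‖ :=
        (W.orthogonalProjectionOnto).le_opNorm x
    _ ≤ 1 * ‖x‖ := mul_le_mul_of_nonneg_right (Submodule.orthogonalProjectionOnto_norm_le W) (norm_nonneg x)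
    _ = ‖x‖ := one_mul _

/-- squared Hilbert–Schmidt norm -/
noncomputable def hs2 (B : V →ₗ[ℂ] V) : ℝ :=
  (LinearMap.trace ℂ V (LinearMap.adjoint B ∘ₗ B)).re

lemma trace_eq_sum_inner {ι : Type*} [Fintype ι] [DecidableEq ι]
    (b : OrthonormalBasis ι ℂ V) (T : V →ₗ[ℂ] V) :
    LinearMap.trace ℂ V T = ∑ i, ⟪b i, T (b i)⟫ := by
  rw [LinearMap.trace_eq_matrix_trace ℂ b.toBasis, Matrix.trace]
  refine Finset.sum_congr rfl fun i _ => ?_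
  rw [Matrix.diag_apply, LinearMap.toMatrix_apply, b.coe_toBasis, b.coe_toBasis_repr_apply,
    b.repr_apply_apply]

lemma hs2_eq_sum {ι : Type*} [Fintype ι] [DecidableEq ι]
    (b : OrthonormalBasis ι ℂ V) (B : V →ₗ[ℂ] V) :
    hs2 B = ∑ i, ‖B (b i)‖ ^ 2 := by
  rw [hs2, trace_eq_sum_inner b, Complex.re_sum]
  refine Finset.sum_congr rfl fun i _ => ?_
  rw [LinearMap.comp_apply, LinearMap.adjoint_inner_right, inner_self_eq_norm_sq_to_K]
  norm_cast

lemma hs2_nonneg (B : V →ₗ[ℂ] V) : 0 ≤ hs2 B := by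
  rw [hs2_eq_sum (stdOrthonormalBasis ℂ V)]
  positivity

lemma hsNorm_eq (B : V →ₗ[ℂ] V) : hsNorm B = Real.sqrt (hs2 B) := rfl

lemma hsNorm_sq (B : V →ₗ[ℂ] V) : hsNorm B ^ 2 = hs2 B := by
  rw [hsNorm_eq, Real.sq_sqrt (hs2_nonneg B)]

lemma hs2_adjoint (B : V →ₗ[ℂ] V) : hs2 (LinearMap.adjoint B) = hs2 B := by
  unfold hs2
  rw [LinearMap.adjoint_adjoint, ← Module.End.mul_eq_comp, ← Module.End.mul_eq_comp,
    LinearMap.trace_mul_comm]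

lemma hs2_projOn_comp_le (W : Submodule ℂ V) (B : V →ₗ[ℂ] V) :
    hs2 (projOn W ∘ₗ B) ≤ hs2 B := by
  rw [hs2_eq_sum (stdOrthonormalBasis ℂ V), hs2_eq_sum (stdOrthonormalBasis ℂ V)]
  refine Finset.sum_le_sum fun i _ => ?_
  rw [LinearMap.comp_apply]
  exact pow_le_pow_left₀ (norm_nonneg _) (norm_projOn_le W _) 2

lemma hs2_comp_projOn_le (W : Submodule ℂ V) (B : V →ₗ[ℂ] V) :
    hs2 (B ∘ₗ projOn W) ≤ hs2 B := by
  rw [← hs2_adjoint (B ∘ₗ projOn W), ← hs2_adjoint B, LinearMap.adjoint_comp, adjoint_projOn]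
  exact hs2_projOn_comp_le W (LinearMap.adjoint B)

lemma hs2_zero : hs2 (0 : V →ₗ[ℂ] V) = 0 := by
  have := hs2_eq_sum (stdOrthonormalBasis ℂ V) (0 : V →ₗ[ℂ] V)
  simpa using this

lemma projOn_comp_self (W : Submodule ℂ V) : projOn W ∘ₗ projOn W = projOn W :=
  LinearMap.ext (projOn_projOn W)

lemma hs2_projOn (W : Submodule ℂ V) :
    hs2 (projOn W) = (LinearMap.trace ℂ V (projOn W)).re := by
  unfold hs2
  rw [adjoint_projOn, projOn_comp_self]

lemma bessel (V_ : ℕ → Submodule ℂ V)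
    (horth : OrthogonalFamily ℂ (fun p => V_ p) (fun p => (V_ p).subtypeₗᵢ))
    (s : Finset ℕ) (w : V) :
    ∑ p ∈ s, ‖projOn (V_ p) w‖ ^ 2 ≤ ‖w‖ ^ 2 := by
  have horth' : ∀ {p q : ℕ}, p ≠ q → ∀ x ∈ V_ p, ∀ y ∈ V_ q, ⟪x, y⟫ = 0 := by
    intro p q hpq x hx y hy
    exact horth hpq ⟨x, hx⟩ ⟨y, hy⟩
  set u := ∑ p ∈ s, projOn (V_ p) w with hu
  have hcross : ∀ p ∈ s, ⟪projOn (V_ p) w, u⟫ = ⟪projOn (V_ p) w, projOn (V_ p) w⟫ := by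
    intro p hp
    rw [hu, inner_sum]
    refine Finset.sum_eq_single p (fun q _ hq => ?_) (fun h => absurd hp h)
    exact horth' (Ne.symm hq) _ (projOn_mem _ _) _ (projOn_mem _ _)
  have huu : ⟪u, u⟫ = ∑ p ∈ s, ⟪projOn (V_ p) w, projOn (V_ p) w⟫ := by
    rw [hu, sum_inner]
    exact Finset.sum_congr rfl fun p hp => by rw [← hu, hcross p hp]
  have hwu : ⟪w, u⟫ = ∑ p ∈ s, ⟪projOn (V_ p) w, projOn (V_ p) w⟫ := by
    rw [hu, inner_sum]
    refine Finset.sum_congr rfl fun p hp => ?_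
    rw [← projOn_projOn (V_ p) w, inner_projOn, projOn_projOn]
  have horthwu : ⟪w - u, u⟫ = 0 := by
    rw [inner_sub_left, hwu, huu, sub_self]
  have hnorm : ‖w‖ ^ 2 = ‖w - u‖ ^ 2 + ‖u‖ ^ 2 := by
    have h := norm_add_sq_eq_norm_sq_add_norm_sq_of_inner_eq_zero (w - u) u horthwu
    rw [sub_add_cancel] at h
    nlinarith [h]
  have hS : ‖u‖ ^ 2 = ∑ p ∈ s, ‖projOn (V_ p) w‖ ^ 2 := by
    have h1 : (‖u‖ ^ 2 : ℝ) = (⟪u, u⟫).re := by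
      rw [inner_self_eq_norm_sq_to_K]; norm_cast
    rw [h1, huu, Complex.re_sum]
    refine Finset.sum_congr rfl fun p _ => ?_
    rw [inner_self_eq_norm_sq_to_K]; norm_cast
  nlinarith [sq_nonneg ‖w - u‖]

lemma ext_of_internal {B B' : V →ₗ[ℂ] V} (V_ : ℕ → Submodule ℂ V)
    (hint : DirectSum.IsInternal V_)
    (h : ∀ q, ∀ x ∈ V_ q, B x = B' x) : B = B' := by
  ext x
  have hx : x ∈ ⨆ q, V_ q := by
    rw [hint.submodule_iSup_eq_top]; trivial
  exact Submodule.iSup_induction V_ (motive := fun x => B x = B' x) hx h (by simp)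
    (fun x y hx hy => by simp only [map_add]; rw [hx, hy])

lemma mem_orth {V_ : ℕ → Submodule ℂ V}
    (horth : OrthogonalFamily ℂ (fun p => V_ p) (fun p => (V_ p).subtypeₗᵢ))
    {p q : ℕ} (hpq : p ≠ q) {x : V} (hx : x ∈ V_ q) : x ∈ (V_ p)ᗮ := by
  rw [Submodule.mem_orthogonal]
  intro y hy
  exact horth hpq ⟨y, hy⟩ ⟨x, hx⟩

lemma abs_re_trace_le (W : Submodule ℂ V) (B : V →ₗ[ℂ] V) :
    |(LinearMap.trace ℂ V (projOn W ∘ₗ B ∘ₗ projOn W)).re| ≤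
      Real.sqrt (hs2 (projOn W)) * Real.sqrt (hs2 (projOn W ∘ₗ B ∘ₗ projOn W)) := by
  set b := stdOrthonormalBasis ℂ V with hb
  set T := projOn W ∘ₗ B ∘ₗ projOn W with hT
  have hTP : ∀ x, projOn W (T x) = T x := fun x => projOn_projOn W _
  have h1 : (LinearMap.trace ℂ V T).re = ∑ i, (⟪projOn W (b i), T (b i)⟫).re := by
    rw [trace_eq_sum_inner b, Complex.re_sum]
    refine Finset.sum_congr rfl fun i _ => ?_
    rw [← hTP (b i), inner_projOn, hTP]
  rw [h1]
  calc |∑ i, (⟪projOn W (b i), T (b i)⟫).re|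
      ≤ ∑ i, |(⟪projOn W (b i), T (b i)⟫).re| := Finset.abs_sum_le_sum_abs _ _
    _ ≤ ∑ i, ‖projOn W (b i)‖ * ‖T (b i)‖ := by
        refine Finset.sum_le_sum fun i _ => ?_
        calc |(⟪projOn W (b i), T (b i)⟫).re| ≤ ‖(⟪projOn W (b i), T (b i)⟫ : ℂ)‖ :=
              Complex.abs_re_le_norm _
          _ ≤ ‖projOn W (b i)‖ * ‖T (b i)‖ := norm_inner_le_norm _ _
    _ ≤ Real.sqrt (∑ i, ‖projOn W (b i)‖ ^ 2) * Real.sqrt (∑ i, ‖T (b i)‖ ^ 2) :=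
        Real.sum_mul_le_sqrt_mul_sqrt _ _ _
    _ = Real.sqrt (hs2 (projOn W)) * Real.sqrt (hs2 T) := by
        rw [hs2_eq_sum b, hs2_eq_sum b]

end Stmt6Aux

open Stmt6Aux in
theorem stmt_6 {V : Type*} [NormedAddCommGroup V] [InnerProductSpace ℂ V]
    [FiniteDimensional ℂ V] (k : ℕ) (A : Module.End ℂ V)
    (V_ : ℕ → Submodule ℂ V)
    (hint : DirectSum.IsInternal V_)
    (horth : OrthogonalFamily ℂ (fun p => V_ p) (fun p => (V_ p).subtypeₗᵢ))
    (htop : ∀ p, k < p → V_ p = ⊥)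
    (hA : ∀ p, Submodule.map A (V_ p) ≤ V_ (p + 1))
    -- `a p` is the squared Hilbert–Schmidt norm of the graded component
    -- `A_p = P_{p+1} ∘ A ∘ P_p`; in particular `a k = 0` since `V_{k+1} = ⊥`.
    (a : ℕ → ℝ)
    (ha : ∀ p, a p = (hsNorm (projOn (V_ (p + 1)) ∘ₗ A ∘ₗ projOn (V_ p))) ^ 2) :
    hsNorm (⁅LinearMap.adjoint A, A⁆ : Module.End ℂ V) ≥
      (∑ p ∈ Finset.range (k + 1), |a p - (if p = 0 then 0 else a (p - 1))|) /
        Real.sqrt (Module.finrank ℂ V) := by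
  classical
  set P : ℕ → (V →ₗ[ℂ] V) := fun p => projOn (V_ p) with hP
  set C : V →ₗ[ℂ] V := (⁅LinearMap.adjoint A, A⁆ : Module.End ℂ V) with hCdef
  have hmemA : ∀ q (x : V), x ∈ V_ q → A x ∈ V_ (q + 1) := fun q x hx => hA q ⟨x, hx, rfl⟩
  -- structural identities
  have hAP : ∀ p, A ∘ₗ P p = P (p + 1) ∘ₗ (A ∘ₗ P p) := by
    intro p; ext x
    simp only [LinearMap.comp_apply, hP]
    exact (projOn_of_mem (hmemA p _ (projOn_mem _ _))).symm
  have hPA : ∀ p, P (p + 1) ∘ₗ A = (P (p + 1) ∘ₗ A) ∘ₗ P p := by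
    intro p
    refine ext_of_internal V_ hint fun q x hx => ?_
    simp only [LinearMap.comp_apply, hP]
    rcases eq_or_ne q p with rfl | hq
    · rw [projOn_of_mem hx]
    · rw [projOn_of_orth (mem_orth horth hq.symm hx),
        projOn_of_orth (mem_orth horth (fun h => hq.symm (Nat.succ_injective h))
          (hmemA q x hx)), map_zero, map_zero]
  have hP0A : P 0 ∘ₗ A = 0 := by
    refine ext_of_internal V_ hint fun q x hx => ?_
    simp only [LinearMap.comp_apply, LinearMap.zero_apply, hP]
    exact projOn_of_orth (mem_orth horth (Nat.succ_ne_zero q).symm (hmemA q x hx))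
  have hsum : (∑ p ∈ Finset.range (k + 1), P p) = LinearMap.id := by
    refine ext_of_internal V_ hint fun q x hx => ?_
    rw [LinearMap.sum_apply, LinearMap.id_apply]
    by_cases hqk : q ≤ k
    · rw [Finset.sum_eq_single_of_mem q (Finset.mem_range.mpr (Nat.lt_succ_of_le hqk))
        (fun p _ hpq => projOn_of_orth (mem_orth horth hpq hx))]
      exact projOn_of_mem hx
    · have hx0 : x = 0 := by
        have hb := htop q (lt_of_not_ge hqk)
        rw [hb] at hx
        simpa using hx
      simp [hx0]
  -- hs2 identities
  have ha2 : ∀ p, a p = hs2 (P (p + 1) ∘ₗ A ∘ₗ P p) := fun p => by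
    rw [ha p, hsNorm_sq]
  have ha' : ∀ p, a p = hs2 (A ∘ₗ P p) := by
    intro p
    rw [ha2 p]
    conv_rhs => rw [hAP p]
  have hprev : ∀ p, (if p = 0 then (0 : ℝ) else a (p - 1)) =
      hs2 (LinearMap.adjoint A ∘ₗ P p) := by
    intro p
    have hadj : hs2 (LinearMap.adjoint A ∘ₗ P p) = hs2 (P p ∘ₗ A) := by
      rw [← hs2_adjoint (P p ∘ₗ A), LinearMap.adjoint_comp, hP]
      rw [adjoint_projOn]
    cases p with
    | zero =>
      rw [if_pos rfl, hadj, hP0A, hs2_zero]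
    | succ q =>
      rw [if_neg (Nat.succ_ne_zero q), Nat.add_sub_cancel, hadj, hPA q, ha2 q,
        LinearMap.comp_assoc]
  have key_adj : ∀ (p : ℕ) (B : V →ₗ[ℂ] V),
      LinearMap.adjoint (B ∘ₗ P p) ∘ₗ (B ∘ₗ P p) =
        P p ∘ₗ (LinearMap.adjoint B ∘ₗ B) ∘ₗ P p := by
    intro p B
    rw [LinearMap.adjoint_comp, hP]
    rw [adjoint_projOn]
    ext x
    simp only [LinearMap.comp_apply]
  have tr_block : ∀ p, (LinearMap.trace ℂ V (P p ∘ₗ C ∘ₗ P p)).re =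
      a p - (if p = 0 then (0 : ℝ) else a (p - 1)) := by
    intro p
    have hsplit : P p ∘ₗ C ∘ₗ P p =
        (P p ∘ₗ (LinearMap.adjoint A ∘ₗ A) ∘ₗ P p) -
          (P p ∘ₗ (A ∘ₗ LinearMap.adjoint A) ∘ₗ P p) := by
      have hC' : C = (LinearMap.adjoint A ∘ₗ A) - (A ∘ₗ LinearMap.adjoint A) := by
        rw [hCdef, Ring.lie_def, Module.End.mul_eq_comp, Module.End.mul_eq_comp]
      rw [hC']
      ext x
      simp only [LinearMap.comp_apply, LinearMap.sub_apply, map_sub]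
    rw [hsplit, map_sub, Complex.sub_re]
    have h1 : (LinearMap.trace ℂ V (P p ∘ₗ (LinearMap.adjoint A ∘ₗ A) ∘ₗ P p)).re =
        hs2 (A ∘ₗ P p) := by
      rw [hs2, key_adj p A]
    have h2 : (LinearMap.trace ℂ V (P p ∘ₗ (A ∘ₗ LinearMap.adjoint A) ∘ₗ P p)).re =
        hs2 (LinearMap.adjoint A ∘ₗ P p) := by
      rw [hs2, key_adj p (LinearMap.adjoint A), LinearMap.adjoint_adjoint]
    rw [h1, h2, ← ha' p, ← hprev p]
  -- the three estimates
  have hd : ∑ p ∈ Finset.range (k + 1), hs2 (P p) = (Module.finrank ℂ V : ℝ) := by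
    have h1 : ∀ p, hs2 (P p) = (LinearMap.trace ℂ V (P p)).re := fun p => hs2_projOn _
    calc ∑ p ∈ Finset.range (k + 1), hs2 (P p)
        = ∑ p ∈ Finset.range (k + 1), (LinearMap.trace ℂ V (P p)).re :=
          Finset.sum_congr rfl fun p _ => h1 p
      _ = (LinearMap.trace ℂ V (∑ p ∈ Finset.range (k + 1), P p)).re := by
          rw [map_sum, Complex.re_sum]
      _ = (Module.finrank ℂ V : ℝ) := by
          rw [hsum, LinearMap.trace_id]
          simp
  have hh : ∑ p ∈ Finset.range (k + 1), hs2 (P p ∘ₗ C ∘ₗ P p) ≤ hs2 C := by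
    have b := stdOrthonormalBasis ℂ V
    calc ∑ p ∈ Finset.range (k + 1), hs2 (P p ∘ₗ C ∘ₗ P p)
        ≤ ∑ p ∈ Finset.range (k + 1), hs2 (P p ∘ₗ C) := by
          refine Finset.sum_le_sum fun p _ => ?_
          rw [← LinearMap.comp_assoc]
          exact hs2_comp_projOn_le _ _
      _ = ∑ p ∈ Finset.range (k + 1), ∑ i, ‖P p (C (b i))‖ ^ 2 := by
          refine Finset.sum_congr rfl fun p _ => ?_
          rw [hs2_eq_sum b]
          simp [LinearMap.comp_apply]
      _ = ∑ i, ∑ p ∈ Finset.range (k + 1), ‖P p (C (b i))‖ ^ 2 := Finset.sum_comm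
      _ ≤ ∑ i, ‖C (b i)‖ ^ 2 := Finset.sum_le_sum fun i _ => bessel V_ horth _ _
      _ = hs2 C := (hs2_eq_sum b C).symm
  have key : (∑ p ∈ Finset.range (k + 1), |a p - (if p = 0 then (0 : ℝ) else a (p - 1))|) ≤
      Real.sqrt (Module.finrank ℂ V) * hsNorm C := by
    calc (∑ p ∈ Finset.range (k + 1), |a p - (if p = 0 then (0 : ℝ) else a (p - 1))|)
        = ∑ p ∈ Finset.range (k + 1), |(LinearMap.trace ℂ V (P p ∘ₗ C ∘ₗ P p)).re| := by
          refine Finset.sum_congr rfl fun p _ => ?_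
          rw [tr_block p]
      _ ≤ ∑ p ∈ Finset.range (k + 1),
            Real.sqrt (hs2 (P p)) * Real.sqrt (hs2 (P p ∘ₗ C ∘ₗ P p)) :=
          Finset.sum_le_sum fun p _ => abs_re_trace_le _ _
      _ ≤ Real.sqrt (∑ p ∈ Finset.range (k + 1), hs2 (P p)) *
            Real.sqrt (∑ p ∈ Finset.range (k + 1), hs2 (P p ∘ₗ C ∘ₗ P p)) :=
          Real.sum_sqrt_mul_sqrt_le _ (fun p => hs2_nonneg _) (fun p => hs2_nonneg _)
      _ ≤ Real.sqrt (Module.finrank ℂ V) * Real.sqrt (hs2 C) := by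
          refine mul_le_mul (Real.sqrt_le_sqrt hd.le) (Real.sqrt_le_sqrt hh)
            (Real.sqrt_nonneg _) (Real.sqrt_nonneg _)
      _ = Real.sqrt (Module.finrank ℂ V) * hsNorm C := by rw [hsNorm_eq]
  rcases Nat.eq_zero_or_pos (Module.finrank ℂ V) with h0 | hpos
  · rw [h0]
    simp only [Nat.cast_zero, Real.sqrt_zero, div_zero, ge_iff_le]
    exact Real.sqrt_nonneg (hs2 C)
  · have hpos' : (0 : ℝ) < Real.sqrt (Module.finrank ℂ V) :=
      Real.sqrt_pos.mpr (by exact_mod_cast hpos)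
    rw [ge_iff_le, div_le_iff₀ hpos']
    calc (∑ p ∈ Finset.range (k + 1), |a p - (if p = 0 then (0 : ℝ) else a (p - 1))|)
        ≤ Real.sqrt (Module.finrank ℂ V) * hsNorm C := key
      _ = hsNorm C * Real.sqrt (Module.finrank ℂ V) := mul_comm _ _
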